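/- The optimal value C* of OriginalFluid equals λ·c^f(r) minus the optimal value of SimplerFluid; that is, min OriginalFluid = λ·c^f(r) − max{ Σ_{a∈S} ν_a·c^f(a) : ν ≥ 0, Σ_{a∈anc(i)} ν_a·π(i)/π(a) ≤ λ·π(i) for all i ∈ S, Σ_{i∈S} ν_i ≤ μ }. -/
import Mathlib


open scoped Classical
open Finset

/-- A finite tree-structured Markov chain: a finite state space partitioned into
levels `0, …, L-1`, a root `r` at level `0`, a parent map `pa` (with `pa r = r` by
convention), and transition probabilities `p i ∈ (0,1]` of being reached from the
parent, with `p r = 1`. -/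
structure TreeMC (S : Type*) [Fintype S] [DecidableEq S] where
  /-- the number of levels -/
  L : ℕ
  /-- the root -/
  r : S
  /-- the parent map (with `pa r = r` by convention) -/
  pa : S → S
  /-- the level of each state -/
  level : S → ℕ
  /-- the probability of being reached from the parent -/
  p : S → ℝ
  level_lt : ∀ i, level i < L
  level_r : level r = 0
  root_unique : ∀ i, level i = 0 → i = r
  pa_r : pa r = r
  level_pa : ∀ i, i ≠ r → level (pa i) + 1 = level i
  p_pos : ∀ i, 0 < p i
  p_le_one : ∀ i, p i ≤ 1
  p_r : p r = 1

namespace TreeMC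

variable {S : Type*} [Fintype S] [DecidableEq S] (M : TreeMC S)

/-- The ancestors of `i`: states on the path from the root to `i` (both included). -/
noncomputable def anc (i : S) : Finset S :=
  Finset.univ.filter fun a => ∃ n : ℕ, M.pa^[n] i = a

/-- The subtree of `i`: all states having `i` as an ancestor. -/
noncomputable def subt (i : S) : Finset S :=
  Finset.univ.filter fun k => i ∈ M.anc k

/-- The subtree of a set of states. -/
noncomputable def subF (X : Finset S) : Finset S :=
  Finset.univ.filter fun k => ∃ i ∈ X, k ∈ M.subt i

/-- `π i`: the probability that a job passes through state `i`. -/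
noncomputable def pi (i : S) : ℝ :=
  ∏ a ∈ M.anc i, M.p a

/-- The children of `i`. -/
noncomputable def child (i : S) : Finset S :=
  Finset.univ.filter fun k => k ≠ M.r ∧ M.pa k = i

/-- `T` is the top set of `X`: a subset of `X` whose subtree covers `X` and in which
no state lies in the subtree of a different state. -/
def IsTopSet (X T : Finset S) : Prop :=
  T ⊆ X ∧ X ⊆ M.subF T ∧ ∀ i ∈ T, ∀ k ∈ T, i ≠ k → k ∉ M.subt i

/-- Expected future cost conditional on being in state `a`. -/
noncomputable def cf (c : S → ℝ) (a : S) : ℝ :=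
  ∑ i ∈ M.subt a, c i * M.pi i / M.pi a

/-- `V` is the ski-rental value function:
`V γ i = min (γ, c i + Σ_{k ∈ child i} p k · V γ k)`. -/
def IsSkiValue (c : S → ℝ) (V : ℝ → S → ℝ) : Prop :=
  ∀ γ : ℝ, ∀ i : S, V γ i = min γ (c i + ∑ k ∈ M.child i, M.p k * V γ k)

/-- Expected future cost-to-go `V^f`. -/
noncomputable def Vf (V : ℝ → S → ℝ) (γ : ℝ) (i : S) : ℝ :=
  ∑ k ∈ M.child i, M.p k * V γ k

/-- The candidate optimal state duals `β*(γ)`. -/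
noncomputable def betaStar (c : S → ℝ) (V : ℝ → S → ℝ) (γ : ℝ) (i : S) : ℝ :=
  max 0 (c i + M.Vf V γ i - γ)

/-- Feasibility for the dual program `D*(γ)`. -/
def DualFeasible (c : S → ℝ) (γ : ℝ) (β : S → ℝ) : Prop :=
  (∀ i, 0 ≤ β i) ∧ ∀ a, M.cf c a ≤ γ + ∑ i ∈ M.subt a, β i * M.pi i / M.pi a

/-- Feasibility for the fluid LP (OriginalFluid). -/
def OrigFeasible (lam mu : ℝ) (q ν : S → ℝ) : Prop :=
  (∀ i, 0 ≤ q i) ∧ (∀ i, 0 ≤ ν i) ∧ q M.r = lam ∧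
    (∀ i, i ≠ M.r → q i = (q (M.pa i) - ν (M.pa i)) * M.p i) ∧
    (∀ i, ν i ≤ q i) ∧ ∑ i : S, ν i ≤ mu

/-- Feasibility for the fluid LP (SimplerFluid). -/
def SimpFeasible (lam mu : ℝ) (ν : S → ℝ) : Prop :=
  (∀ i, 0 ≤ ν i) ∧ (∀ i, ∑ a ∈ M.anc i, ν a * M.pi i / M.pi a ≤ lam * M.pi i) ∧
    ∑ i : S, ν i ≤ mu

end TreeMC

namespace TreeMC

variable {S : Type*} [Fintype S] [DecidableEq S] (M : TreeMC S)

lemma aux_level_pa_le (i : S) : M.level (M.pa i) ≤ M.level i := by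
  by_cases h : i = M.r
  · subst h; rw [M.pa_r]
  · have := M.level_pa i h; omega

lemma aux_level_iter_le (n : ℕ) (i : S) : M.level (M.pa^[n] i) ≤ M.level i := by
  induction n generalizing i with
  | zero => simp
  | succ n ih =>
    rw [Function.iterate_succ_apply]
    exact (ih (M.pa i)).trans (M.aux_level_pa_le i)

lemma aux_mem_anc_self (i : S) : i ∈ M.anc i := by
  simp only [anc, Finset.mem_filter, Finset.mem_univ, true_and]
  exact ⟨0, rfl⟩

lemma aux_anc_r : M.anc M.r = {M.r} := by
  ext a
  simp only [anc, Finset.mem_filter, Finset.mem_univ, true_and, Finset.mem_singleton]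
  constructor
  · rintro ⟨n, rfl⟩
    exact Function.iterate_fixed M.pa_r n
  · rintro rfl; exact ⟨0, rfl⟩

lemma aux_anc_of_ne (i : S) (h : i ≠ M.r) :
    M.anc i = insert i (M.anc (M.pa i)) := by
  ext a
  simp only [anc, Finset.mem_filter, Finset.mem_univ, true_and, Finset.mem_insert]
  constructor
  · rintro ⟨n, rfl⟩
    cases n with
    | zero => left; rfl
    | succ n => right; exact ⟨n, by rw [← Function.iterate_succ_apply]⟩
  · rintro (rfl | ⟨n, rfl⟩)
    · exact ⟨0, rfl⟩
    · exact ⟨n + 1, by rw [Function.iterate_succ_apply]⟩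

lemma aux_not_mem_anc_pa (i : S) (h : i ≠ M.r) : i ∉ M.anc (M.pa i) := by
  simp only [anc, Finset.mem_filter, Finset.mem_univ, true_and]
  rintro ⟨n, hn⟩
  have h1 := M.aux_level_iter_le n (M.pa i)
  rw [hn] at h1
  have h2 := M.level_pa i h
  omega

lemma aux_pi_pos (i : S) : 0 < M.pi i :=
  Finset.prod_pos fun a _ => M.p_pos a

lemma aux_pi_r : M.pi M.r = 1 := by
  rw [pi, aux_anc_r]; simp [M.p_r]

lemma aux_pi_of_ne (i : S) (h : i ≠ M.r) : M.pi i = M.p i * M.pi (M.pa i) := by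
  rw [pi, aux_anc_of_ne M i h, Finset.prod_insert (M.aux_not_mem_anc_pa i h)]; rfl

lemma aux_iterate_level_eq_r : ∀ n (i : S), M.level i = n → M.pa^[n] i = M.r := by
  intro n
  induction n with
  | zero => intro i h; simpa using M.root_unique i h
  | succ n ih =>
    intro i h
    have hir : i ≠ M.r := by
      intro e; rw [e, M.level_r] at h; omega
    have h2 := M.level_pa i hir
    rw [Function.iterate_succ_apply]
    exact ih (M.pa i) (by omega)

lemma aux_r_mem_anc (i : S) : M.r ∈ M.anc i := by
  simp only [anc, Finset.mem_filter, Finset.mem_univ, true_and]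
  exact ⟨M.level i, M.aux_iterate_level_eq_r (M.level i) i rfl⟩

lemma aux_subt_r : M.subt M.r = Finset.univ := by
  ext i; simp [subt, M.aux_r_mem_anc i]

lemma aux_mem_subt_iff (i a : S) : i ∈ M.subt a ↔ a ∈ M.anc i := by
  simp [subt]

/-- `q i - ν i` as a function of `ν`. -/
noncomputable def Dq (lam : ℝ) (ν : S → ℝ) (i : S) : ℝ :=
  lam * M.pi i - ∑ a ∈ M.anc i, ν a * M.pi i / M.pi a

lemma aux_Dq_r (lam : ℝ) (ν : S → ℝ) : M.Dq lam ν M.r = lam - ν M.r := by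
  simp [Dq, aux_anc_r, aux_pi_r]

lemma aux_Dq_rec (lam : ℝ) (ν : S → ℝ) (i : S) (h : i ≠ M.r) :
    M.Dq lam ν i + ν i = M.Dq lam ν (M.pa i) * M.p i := by
  have hpi : M.pi i ≠ 0 := (M.aux_pi_pos i).ne'
  unfold Dq
  rw [aux_anc_of_ne M i h, Finset.sum_insert (M.aux_not_mem_anc_pa i h)]
  have h1 : ν i * M.pi i / M.pi i = ν i := by
    rw [mul_div_assoc, div_self hpi, mul_one]
  rw [h1]
  have h2 : ∀ a ∈ M.anc (M.pa i), ν a * M.pi i / M.pi a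
      = (ν a * M.pi (M.pa i) / M.pi a) * M.p i := by
    intro a _
    rw [M.aux_pi_of_ne i h]; ring
  rw [Finset.sum_congr rfl h2, ← Finset.sum_mul, M.aux_pi_of_ne i h]
  ring

lemma aux_cf_r (c : S → ℝ) : M.cf c M.r = ∑ i : S, c i * M.pi i := by
  rw [cf, aux_subt_r, aux_pi_r]
  simp

lemma aux_sum_nu_cf (c : S → ℝ) (ν : S → ℝ) :
    ∑ a : S, ν a * M.cf c a
      = ∑ i : S, c i * ∑ a ∈ M.anc i, ν a * M.pi i / M.pi a := by
  unfold cf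
  calc ∑ a : S, ν a * ∑ i ∈ M.subt a, c i * M.pi i / M.pi a
      = ∑ a : S, ∑ i ∈ M.subt a, ν a * (c i * M.pi i / M.pi a) := by
        simp [Finset.mul_sum]
    _ = ∑ a : S, ∑ i : S, if a ∈ M.anc i then ν a * (c i * M.pi i / M.pi a) else 0 := by
        refine Finset.sum_congr rfl fun a _ => ?_
        rw [subt, Finset.sum_filter]
    _ = ∑ i : S, ∑ a : S, if a ∈ M.anc i then ν a * (c i * M.pi i / M.pi a) else 0 :=
        Finset.sum_comm
    _ = ∑ i : S, c i * ∑ a ∈ M.anc i, ν a * M.pi i / M.pi a := by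
        refine Finset.sum_congr rfl fun i _ => ?_
        rw [Finset.mul_sum]
        rw [← Finset.sum_filter]
        have : Finset.univ.filter (· ∈ M.anc i) = M.anc i := by
          ext a; simp
        rw [this]
        exact Finset.sum_congr rfl fun a _ => by ring

lemma aux_obj_eq (c : S → ℝ) (lam : ℝ) (ν : S → ℝ) :
    ∑ i : S, c i * M.Dq lam ν i
      = lam * M.cf c M.r - ∑ a : S, ν a * M.cf c a := by
  rw [aux_cf_r, aux_sum_nu_cf, Finset.mul_sum, ← Finset.sum_sub_distrib]
  refine Finset.sum_congr rfl fun i _ => ?_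
  unfold Dq
  ring

lemma aux_orig_diff (lam mu : ℝ) (q ν : S → ℝ)
    (hf : M.OrigFeasible lam mu q ν) : ∀ i, q i - ν i = M.Dq lam ν i := by
  obtain ⟨hq0, hν0, hqr, hrec, hνq, hsum⟩ := hf
  suffices h : ∀ n (i : S), M.level i = n → q i - ν i = M.Dq lam ν i by
    intro i; exact h (M.level i) i rfl
  intro n
  induction n with
  | zero =>
    intro i h
    have : i = M.r := M.root_unique i h
    subst this
    rw [hqr, aux_Dq_r]
  | succ n ih =>
    intro i h
    have hir : i ≠ M.r := by
      intro e; rw [e, M.level_r] at h; omega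
    have h2 := M.level_pa i hir
    have hpa := ih (M.pa i) (by omega)
    have := hrec i hir
    rw [this, hpa, ← M.aux_Dq_rec lam ν i hir]
    ring

end TreeMC

/-- The optimal value `C*` of OriginalFluid equals `λ·c^f(r)` minus the
optimal value of SimplerFluid. -/
theorem originalFluid_eq_simplerFluid {S : Type*} [Fintype S] [DecidableEq S]
    (M : TreeMC S) (c : S → ℝ) (hc : ∀ i, 0 < c i)
    (lam mu : ℝ) (hlam0 : 0 < lam) (hlam1 : lam < 1) (hmu0 : 0 < mu) (hmu1 : mu ≤ 1)
    (Cstar Pstar : ℝ)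
    (hC : IsLeast
      {v : ℝ | ∃ q ν : S → ℝ, M.OrigFeasible lam mu q ν ∧
        v = ∑ i : S, c i * (q i - ν i)} Cstar)
    (hP : IsGreatest
      {v : ℝ | ∃ ν : S → ℝ, M.SimpFeasible lam mu ν ∧
        v = ∑ a : S, ν a * M.cf c a} Pstar) :
    Cstar = lam * M.cf c M.r - Pstar := by
    -- Show `lam * cf r - Pstar` is also a least element of the OriginalFluid value set.
  have key : IsLeast
      {v : ℝ | ∃ q ν : S → ℝ, M.OrigFeasible lam mu q ν ∧
        v = ∑ i : S, c i * (q i - ν i)} (lam * M.cf c M.r - Pstar) := by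
    constructor
    · -- membership
      obtain ⟨ν, ⟨hν0, hanc, hsum⟩, hval⟩ := hP.1
      refine ⟨fun i => M.Dq lam ν i + ν i, ν, ⟨?_, hν0, ?_, ?_, ?_, hsum⟩, ?_⟩
      · intro i
        beta_reduce
        have hD : 0 ≤ M.Dq lam ν i := by
          have := hanc i; unfold TreeMC.Dq; linarith
        have := hν0 i; linarith
      · beta_reduce
        rw [M.aux_Dq_r]; ring
      · intro i hir
        beta_reduce
        rw [M.aux_Dq_rec lam ν i hir]
        ring
      · intro i
        beta_reduce
        have hD : 0 ≤ M.Dq lam ν i := by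
          have := hanc i; unfold TreeMC.Dq; linarith
        linarith
      · have : ∀ i : S, M.Dq lam ν i + ν i - ν i = M.Dq lam ν i := fun i => by ring
        simp only [this]
        rw [M.aux_obj_eq, hval]
    · -- lower bound
      rintro v ⟨q, ν, hf, rfl⟩
      have hd := M.aux_orig_diff lam mu q ν hf
      obtain ⟨hq0, hν0, hqr, hrec, hνq, hsum⟩ := hf
      have hSimp : M.SimpFeasible lam mu ν := by
        refine ⟨hν0, fun i => ?_, hsum⟩
        have : 0 ≤ M.Dq lam ν i := by rw [← hd i]; linarith [hνq i]
        unfold TreeMC.Dq at this; linarith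
      have hmem : (∑ a : S, ν a * M.cf c a) ∈
          {v : ℝ | ∃ ν : S → ℝ, M.SimpFeasible lam mu ν ∧
            v = ∑ a : S, ν a * M.cf c a} := ⟨ν, hSimp, rfl⟩
      have hle := hP.2 hmem
      have : ∑ i : S, c i * (q i - ν i) = lam * M.cf c M.r - ∑ a : S, ν a * M.cf c a := by
        rw [← M.aux_obj_eq]
        exact Finset.sum_congr rfl fun i _ => by rw [hd i]
      rw [this]
      linarith
  exact hC.unique key
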